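/- Localisation of the maximal function: there is a constant K₀ depending only on the dimension n such that the following holds. For every locally integrable function f on ℝⁿ, every cube Q and every λ > 0 for which there exists a point x̄ ∈ 4Q with Mf(x̄) ≤ λ, one has, for every K ≥ K₀, the inclusion {x ∈ Q : Mf(x) > Kλ} ⊆ {x : M(f·1_{8Q})(x) > (K/K₀)λ}. -/

import Mathlib

open MeasureTheory ENNReal

noncomputable section

/-- Axis-parallel closed cube with center `c` and sidelength `ℓ`. -/
def cube {n : ℕ} (c : EuclideanSpace ℝ (Fin n)) (ℓ : ℝ) : Set (EuclideanSpace ℝ (Fin n)) :=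
  {x | ∀ i, |x i - c i| ≤ ℓ / 2}

/-- The uncentered Hardy–Littlewood maximal operator over axis-parallel cubes,
with values in `ℝ≥0∞`. -/
noncomputable def Mmax {n : ℕ} (f : EuclideanSpace ℝ (Fin n) → ℝ)
    (x : EuclideanSpace ℝ (Fin n)) : ℝ≥0∞ :=
  ⨆ (c : EuclideanSpace ℝ (Fin n)) (ℓ : ℝ) (_ : 0 < ℓ) (_ : x ∈ cube c ℓ),
    (volume (cube c ℓ))⁻¹ * ∫⁻ y in cube c ℓ, (‖f y‖₊ : ℝ≥0∞)

lemma cube_eq_preimage {n : ℕ} (c : EuclideanSpace ℝ (Fin n)) (ℓ : ℝ) :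
    cube c ℓ = (MeasurableEquiv.toLp 2 (Fin n → ℝ)).symm ⁻¹'
      (Set.pi Set.univ fun i => Set.Icc (c i - ℓ/2) (c i + ℓ/2)) := by
  ext x
  simp only [cube, Set.mem_setOf_eq, Set.mem_preimage, Set.mem_univ_pi, Set.mem_Icc, abs_le,
    MeasurableEquiv.coe_toLp_symm]
  constructor
  · intro h i
    constructor <;> [linarith [(h i).1]; linarith [(h i).2]]
  · intro h i
    constructor <;> [linarith [(h i).1]; linarith [(h i).2]]

lemma measurableSet_cube {n : ℕ} (c : EuclideanSpace ℝ (Fin n)) (ℓ : ℝ) :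
    MeasurableSet (cube c ℓ) := by
  rw [cube_eq_preimage]
  exact (MeasurableEquiv.toLp 2 (Fin n → ℝ)).symm.measurable
    (MeasurableSet.univ_pi fun i => measurableSet_Icc)

lemma volume_cube {n : ℕ} (c : EuclideanSpace ℝ (Fin n)) (ℓ : ℝ) :
    volume (cube c ℓ) = ENNReal.ofReal ℓ ^ n := by
  rw [cube_eq_preimage]
  rw [(EuclideanSpace.volume_preserving_symm_measurableEquiv_toLp (Fin n)).measure_preimage
    ((MeasurableSet.univ_pi fun i => measurableSet_Icc).nullMeasurableSet)]
  rw [volume_pi_pi]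
  have : ∀ i : Fin n, volume (Set.Icc (c i - ℓ/2) (c i + ℓ/2)) = ENNReal.ofReal ℓ := by
    intro i; rw [Real.volume_Icc]; ring_nf
  simp [this]

/-- Localisation of the maximal function: there is `K₀`, depending only on the dimension `n`,
such that for every locally integrable `f`, every cube `Q` and every `λ > 0` for which some
`x̄ ∈ 4Q` satisfies `Mf(x̄) ≤ λ`, one has for every `K ≥ K₀` the inclusion
`{x ∈ Q : Mf(x) > Kλ} ⊆ {M(f·1_{8Q}) > (K/K₀)λ}`. -/
theorem maximal_function_localisation (n : ℕ) (hn : 1 ≤ n) :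
    ∃ K₀ : ℝ, 0 < K₀ ∧
      ∀ f : EuclideanSpace ℝ (Fin n) → ℝ, LocallyIntegrable f volume →
      ∀ (c : EuclideanSpace ℝ (Fin n)) (ℓ : ℝ), 0 < ℓ →
      ∀ lam : ℝ, 0 < lam →
      (∃ xbar ∈ cube c (4 * ℓ), Mmax f xbar ≤ ENNReal.ofReal lam) →
      ∀ K : ℝ, K₀ ≤ K →
        {x | x ∈ cube c ℓ ∧ ENNReal.ofReal (K * lam) < Mmax f x} ⊆
          {x | ENNReal.ofReal (K / K₀ * lam) <
            Mmax ((cube c (8 * ℓ)).indicator f) x} := by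
  refine ⟨3 ^ n, by positivity, ?_⟩
  intro f _hf c ℓ hℓ lam hlam ⟨xbar, hxbar, hM⟩ K hK x ⟨hxQ, hx⟩
  have h3n : (1:ℝ) ≤ 3 ^ n := one_le_pow₀ (by norm_num)
  have hKpos : 0 < K := lt_of_lt_of_le (by positivity) hK
  simp only [Mmax, lt_iSup_iff] at hx
  obtain ⟨d, s, hs, hxds, havg⟩ := hx
  by_cases hcase : s ≤ 3 * ℓ
  · -- small cube: contained in 8Q
    have hsub : cube d s ⊆ cube c (8 * ℓ) := by
      intro y hy i
      have h1 := hy i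
      have h2 := hxds i
      have h3 := hxQ i
      have t1 : |y i - c i| ≤ |y i - d i| + |d i - c i| := abs_sub_le _ _ _
      have t2 : |d i - c i| ≤ |d i - x i| + |x i - c i| := abs_sub_le _ _ _
      have t3 : |d i - x i| = |x i - d i| := abs_sub_comm _ _
      linarith
    have heq : (∫⁻ y in cube d s, (‖(cube c (8*ℓ)).indicator f y‖₊ : ℝ≥0∞))
        = ∫⁻ y in cube d s, (‖f y‖₊ : ℝ≥0∞) :=
      setLIntegral_congr_fun (measurableSet_cube d s)
        (fun y hy => by rw [Set.indicator_of_mem (hsub hy)])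
    have hle : ENNReal.ofReal (K / 3 ^ n * lam) ≤ ENNReal.ofReal (K * lam) :=
      ENNReal.ofReal_le_ofReal
        (mul_le_mul_of_nonneg_right (div_le_self hKpos.le h3n) hlam.le)
    calc ENNReal.ofReal (K / 3 ^ n * lam)
        ≤ ENNReal.ofReal (K * lam) := hle
      _ < (volume (cube d s))⁻¹ *
          ∫⁻ y in cube d s, (‖(cube c (8*ℓ)).indicator f y‖₊ : ℝ≥0∞) := by
          rw [heq]; exact havg
      _ ≤ Mmax ((cube c (8*ℓ)).indicator f) x :=
          le_iSup_of_le d <| le_iSup_of_le s <| le_iSup_of_le hs <|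
            le_iSup_of_le hxds le_rfl
  · exfalso
    push_neg at hcase
    have hxbar' : xbar ∈ cube d (3 * s) := by
      intro i
      have h1 := hxbar i
      have h2 := hxQ i
      have h3 := hxds i
      have t1 : |xbar i - d i| ≤ |xbar i - c i| + |c i - d i| := abs_sub_le _ _ _
      have t2 : |c i - d i| ≤ |c i - x i| + |x i - d i| := abs_sub_le _ _ _
      have t3 : |c i - x i| = |x i - c i| := abs_sub_comm _ _
      linarith
    have hsub : cube d s ⊆ cube d (3 * s) := by
      intro y hy i
      have := hy i
      linarith
    set A := ∫⁻ y in cube d s, (‖f y‖₊ : ℝ≥0∞) with hA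
    have hMge : (volume (cube d (3*s)))⁻¹ * A ≤ Mmax f xbar := by
      refine le_trans ?_ (le_iSup_of_le d <| le_iSup_of_le (3*s) <|
        le_iSup_of_le (by linarith) <| le_iSup_of_le hxbar' le_rfl)
      exact mul_le_mul_right (lintegral_mono_set hsub) _
    have c3ne : ((ENNReal.ofReal 3) ^ n : ℝ≥0∞) ≠ 0 := by
      simp [ENNReal.ofReal_pos.2 (by norm_num : (0:ℝ) < 3)]
    have c3top : ((ENNReal.ofReal 3) ^ n : ℝ≥0∞) ≠ ⊤ := by
      exact ENNReal.pow_ne_top ENNReal.ofReal_ne_top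
    have hvol3 : volume (cube d (3*s)) = (ENNReal.ofReal 3) ^ n * (ENNReal.ofReal s) ^ n := by
      rw [volume_cube, ENNReal.ofReal_mul (by norm_num), mul_pow]
    have hvol : volume (cube d s) = (ENNReal.ofReal s) ^ n := volume_cube d s
    -- chain
    have key : ENNReal.ofReal lam < ENNReal.ofReal lam := by
      calc ENNReal.ofReal lam
          = ((ENNReal.ofReal 3) ^ n)⁻¹ * ((ENNReal.ofReal 3) ^ n * ENNReal.ofReal lam) := by
            rw [← mul_assoc, ENNReal.inv_mul_cancel c3ne c3top, one_mul]
        _ = ((ENNReal.ofReal 3) ^ n)⁻¹ * ENNReal.ofReal (3 ^ n * lam) := by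
            rw [ENNReal.ofReal_mul (by positivity), ENNReal.ofReal_pow (by norm_num)]
        _ ≤ ((ENNReal.ofReal 3) ^ n)⁻¹ * ENNReal.ofReal (K * lam) := by
            exact mul_le_mul_right
              (ENNReal.ofReal_le_ofReal (mul_le_mul_of_nonneg_right hK hlam.le)) _
        _ < ((ENNReal.ofReal 3) ^ n)⁻¹ * ((volume (cube d s))⁻¹ * A) := by
            rw [ENNReal.mul_lt_mul_iff_right (by simp [c3ne]) (by simp [c3top])]
            exact havg
        _ = (volume (cube d (3*s)))⁻¹ * A := by
            rw [hvol3, hvol, ENNReal.mul_inv (Or.inl c3ne) (Or.inl c3top), mul_assoc]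
        _ ≤ Mmax f xbar := hMge
        _ ≤ ENNReal.ofReal lam := hM
    exact lt_irrefl _ key
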